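/- Let φ: [0, T] → ℝ solve φ' = −2Lφ − γ(φ² + 1), φ(0) = 1/λ* with L ≥ 0, γ > 0, λ* ∈ (0,1). Then φ is strictly decreasing on its interval of existence, and φ(τ) ≥ λ* for all τ ∈ [0, T] whenever T ≤ T(L, γ, λ*), where T(L,γ,λ) is defined piecewise: for γ > L, T = (1/(Lr))·arctan( r(1−λ) / (2(λ/(1+λ))(γ/L − 1) + 1 + λ) ) with r = √((γ/L)² − 1) (and T = (1/γ)(arctan(1/λ) − arctan(λ)) when L = 0); for γ = L, T = (1/L)(1−λ)/(1+λ); for γ < L, the same formula with arctan replaced by artanh and r = √(1 − (γ/L)²). -/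

import Mathlib

open Real

open Set

/-- The MATI bound function `T(L, γ, λ)` of Carnevale–Teel–Nešić. -/
noncomputable def matiBound (L γ lam : ℝ) : ℝ :=
  if L = 0 then (1 / γ) * (arctan (1 / lam) - arctan lam)
  else if L < γ then
    (1 / (L * Real.sqrt ((γ / L) ^ 2 - 1))) *
      arctan (Real.sqrt ((γ / L) ^ 2 - 1) * (1 - lam) /
        (2 * (lam / (1 + lam)) * (γ / L - 1) + 1 + lam))
  else if γ = L then (1 / L) * ((1 - lam) / (1 + lam))
  else
    (1 / (L * Real.sqrt (1 - (γ / L) ^ 2))) *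
      ((1 / 2) * Real.log
        ((1 + Real.sqrt (1 - (γ / L) ^ 2) * (1 - lam) /
            (2 * (lam / (1 + lam)) * (γ / L - 1) + 1 + lam)) /
         (1 - Real.sqrt (1 - (γ / L) ^ 2) * (1 - lam) /
            (2 * (lam / (1 + lam)) * (γ / L - 1) + 1 + lam))))

/-- Grönwall-style positivity: a function whose derivative is bounded by `K*|g|`
and which is positive at `0` stays positive. -/
lemma gronwall_pos (g g' : ℝ → ℝ) (T K : ℝ)
    (hg : ∀ t ∈ Set.Icc (0:ℝ) T, HasDerivAt g (g' t) t)
    (hb : ∀ t ∈ Set.Icc (0:ℝ) T, |g' t| ≤ K * |g t|)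
    (h0 : 0 < g 0) : ∀ t ∈ Set.Icc (0:ℝ) T, 0 < g t := by
  by_contra hcon
  push_neg at hcon
  obtain ⟨τ, hτ, hτ0⟩ := hcon
  have hsub : Set.Icc (0:ℝ) τ ⊆ Set.Icc 0 T := Set.Icc_subset_Icc le_rfl hτ.2
  have hcont : ContinuousOn g (Set.Icc 0 τ) := fun t ht =>
    ((hg t (hsub ht)).continuousAt).continuousWithinAt
  obtain ⟨t₁, ht₁, hgt₁⟩ := intermediate_value_Icc' hτ.1 hcont ⟨hτ0, h0.le⟩
  -- reversed-time function
  set h : ℝ → ℝ := fun s => g (t₁ - s) with hh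
  have hsubt : Set.Icc (0:ℝ) t₁ ⊆ Set.Icc 0 T :=
    Set.Icc_subset_Icc le_rfl (ht₁.2.trans hτ.2)
  have hhd : ∀ s ∈ Set.Ico (0:ℝ) t₁, HasDerivAt h (-g' (t₁ - s)) s := by
    intro s hs
    have hmem : t₁ - s ∈ Set.Icc (0:ℝ) T :=
      hsubt ⟨by linarith [hs.2], by linarith [hs.1, ht₁.2]⟩
    have hinner : HasDerivAt (fun s : ℝ => t₁ - s) (-1) s := by
      simpa using (hasDerivAt_id s).const_sub t₁
    have := (hg _ hmem).comp s hinner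
    exact this.congr_deriv (by ring)
  have hhc : ContinuousOn h (Set.Icc 0 t₁) := by
    intro s hs
    have hmem : t₁ - s ∈ Set.Icc (0:ℝ) T := hsubt ⟨by linarith [hs.2], by linarith [hs.1, ht₁.2]⟩
    exact ((hg _ hmem).continuousAt.comp (by fun_prop)).continuousWithinAt
  have hz : ∀ s ∈ Set.Icc (0:ℝ) t₁, ‖h s‖ ≤ gronwallBound 0 K 0 (s - 0) := by
    refine norm_le_gronwallBound_of_norm_deriv_right_le hhc
      (fun s hs => (hhd s hs).hasDerivWithinAt) (by simp [hh, hgt₁]) ?_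
    intro s hs
    have hmem : t₁ - s ∈ Set.Icc (0:ℝ) T := hsubt ⟨by linarith [hs.2], by linarith [hs.1, ht₁.2]⟩
    have := hb _ hmem
    simpa [hh, abs_neg] using by linarith [this]
  have := hz t₁ ⟨ht₁.1, le_rfl⟩
  rw [gronwallBound_ε0_δ0] at this
  simp only [hh, sub_self] at this
  have : g 0 = 0 := by simpa [norm_eq_abs, abs_nonpos_iff] using this
  linarith


lemma clock_strictAnti (φ : ℝ → ℝ) (L γ lamS T : ℝ)
    (hL : 0 ≤ L) (hγ : 0 < γ) (hS0 : 0 < lamS)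
    (hode : ∀ τ ∈ Set.Icc (0 : ℝ) T,
      HasDerivAt φ (-2 * L * φ τ - γ * ((φ τ) ^ 2 + 1)) τ)
    (hinit : φ 0 = 1 / lamS) (hT : 0 ≤ T) :
    StrictAntiOn φ (Set.Icc (0 : ℝ) T) := by
  set q : ℝ → ℝ := fun t => γ * (φ t) ^ 2 + 2 * L * (φ t) + γ with hq
  set q' : ℝ → ℝ := fun t => -((2 * γ * φ t + 2 * L) * q t) with hq'
  have hqd : ∀ t ∈ Set.Icc (0:ℝ) T, HasDerivAt q (q' t) t := by
    intro t ht
    have h := hode t ht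
    have h2 := (((h.pow 2).const_mul γ).add (h.const_mul (2 * L))).add_const γ
    refine h2.congr_deriv (Eq.symm ?_)
    simp only [hq', hq]
    push_cast
    ring
  -- bound on φ
  obtain ⟨C, hC⟩ := (isCompact_Icc (a := (0:ℝ)) (b := T)).exists_bound_of_continuousOn
    (fun t ht => ((hode t ht).continuousAt).continuousWithinAt)
  have hqb : ∀ t ∈ Set.Icc (0:ℝ) T, |q' t| ≤ (2 * γ * C + 2 * L) * |q t| := by
    intro t ht
    have h1 : |φ t| ≤ C := by simpa using hC t ht
    have h2 : |q' t| = |2 * γ * φ t + 2 * L| * |q t| := by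
      rw [hq']; rw [abs_neg, abs_mul]
    rw [h2]
    have h3 : |2 * γ * φ t + 2 * L| ≤ 2 * γ * C + 2 * L := by
      have := abs_nonneg (φ t)
      calc |2 * γ * φ t + 2 * L| ≤ |2 * γ * φ t| + |2 * L| := abs_add_le _ _
        _ = 2 * γ * |φ t| + 2 * L := by
            rw [abs_mul, abs_mul, abs_mul]
            simp [abs_of_nonneg hγ.le, abs_of_nonneg hL]
        _ ≤ 2 * γ * C + 2 * L := by nlinarith
    exact mul_le_mul_of_nonneg_right h3 (abs_nonneg _)
  have hq0 : 0 < q 0 := by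
    have : (0:ℝ) < 1 / lamS := by positivity
    rw [hq]; simp only [hinit]; nlinarith
  have hqpos := gronwall_pos q q' T (2 * γ * C + 2 * L) hqd hqb hq0
  refine strictAntiOn_of_deriv_neg (convex_Icc 0 T)
    (fun t ht => ((hode t ht).continuousAt).continuousWithinAt) ?_
  intro x hx
  rw [interior_Icc] at hx
  have hxm : x ∈ Set.Icc (0:ℝ) T := ⟨hx.1.le, hx.2.le⟩
  rw [(hode x hxm).deriv]
  have := hqpos x hxm
  simp only [hq] at this
  nlinarith


lemma key_bound (φ F : ℝ → ℝ) (L γ lamS T : ℝ) (hγ : 0 < γ) (hL : 0 ≤ L)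
    (hS0 : 0 < lamS) (hS1 : lamS < 1) (hT : 0 ≤ T)
    (hode : ∀ τ ∈ Set.Icc (0:ℝ) T,
      HasDerivAt φ (-2 * L * φ τ - γ * ((φ τ) ^ 2 + 1)) τ)
    (hinit : φ 0 = 1 / lamS)
    (hanti : StrictAntiOn φ (Set.Icc (0:ℝ) T))
    (hF : ∀ x : ℝ, lamS ≤ x → x ≤ 1 / lamS →
      HasDerivAt F (1 / (γ * x ^ 2 + 2 * L * x + γ)) x)
    (hTb : T ≤ F (1 / lamS) - F lamS) :
    ∀ τ ∈ Set.Icc (0:ℝ) T, lamS ≤ φ τ := by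
  by_contra hcon
  push_neg at hcon
  obtain ⟨τ₀, hτ₀, hlt⟩ := hcon
  have hlam1 : lamS ≤ 1 / lamS := by
    rw [le_div_iff₀ hS0]; nlinarith
  have hcontφ : ContinuousOn φ (Set.Icc 0 τ₀) := fun t ht =>
    ((hode t (Set.Icc_subset_Icc le_rfl hτ₀.2 ht)).continuousAt).continuousWithinAt
  have hmem : lamS ∈ Set.Icc (φ τ₀) (φ 0) := ⟨hlt.le, by rw [hinit]; exact hlam1⟩
  obtain ⟨t₁, ht₁, hφt₁⟩ := intermediate_value_Icc' hτ₀.1 hcontφ hmem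
  have ht₁T : t₁ ∈ Set.Icc (0:ℝ) T := ⟨ht₁.1, ht₁.2.trans hτ₀.2⟩
  have hsubt : Set.Icc (0:ℝ) t₁ ⊆ Set.Icc 0 T := Set.Icc_subset_Icc le_rfl ht₁T.2
  -- bounds for φ on [0, t₁]
  have hub : ∀ t ∈ Set.Icc (0:ℝ) t₁, φ t ≤ 1 / lamS := by
    intro t ht
    rcases eq_or_lt_of_le ht.1 with h | h
    · rw [← h, hinit]
    · have := hanti (Set.left_mem_Icc.2 hT) (hsubt ht) h
      rw [hinit] at this; exact this.le
  have hlb : ∀ t ∈ Set.Icc (0:ℝ) t₁, lamS ≤ φ t := by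
    intro t ht
    rcases eq_or_lt_of_le ht.2 with h | h
    · rw [h, hφt₁]
    · have := hanti (hsubt ht) ht₁T h
      rw [hφt₁] at this; exact this.le
  -- G is constant
  set G : ℝ → ℝ := fun t => F (φ t) + t with hG
  have hGd : ∀ t ∈ Set.Icc (0:ℝ) t₁, HasDerivAt G 0 t := by
    intro t ht
    have h1 := hode t (hsubt ht)
    have h2 := hF (φ t) (hlb t ht) (hub t ht)
    have h3 := (h2.comp t h1).add (hasDerivAt_id t)
    have hQ : 0 < γ * (φ t) ^ 2 + 2 * L * (φ t) + γ := by
      have := hlb t ht; nlinarith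
    refine h3.congr_deriv (Eq.symm ?_)
    have hQne : γ * (φ t) ^ 2 + 2 * L * (φ t) + γ ≠ 0 := hQ.ne'
    rw [show -2 * L * φ t - γ * (φ t ^ 2 + 1) = -(γ * φ t ^ 2 + 2 * L * φ t + γ) by ring,
      mul_neg, one_div_mul_cancel hQne]
    ring
  have hconst := constant_of_has_deriv_right_zero
    (fun t ht => ((hGd t ht).continuousAt).continuousWithinAt)
    (fun t ht => (hGd t (Set.mem_Icc_of_Ico ht)).hasDerivWithinAt)
  have ht1val := hconst t₁ ⟨ht₁.1, le_rfl⟩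
  simp only [hG, hφt₁, hinit] at ht1val
  -- t₁ = F (1/lamS) - F lamS
  have ht1eq : t₁ = F (1 / lamS) - F lamS := by linarith
  have ht₁τ₀ : t₁ < τ₀ := by
    rcases lt_trichotomy t₁ τ₀ with h | h | h
    · exact h
    · rw [h] at hφt₁; linarith
    · have := hanti hτ₀ ht₁T h
      rw [hφt₁] at this; linarith
  linarith [hτ₀.2]


set_option maxHeartbeats 2000000 in
lemma mati_F (L γ lamS : ℝ) (hL : 0 ≤ L) (hγ : 0 < γ) (hS0 : 0 < lamS) (hS1 : lamS < 1) :
    ∃ F : ℝ → ℝ,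
      (∀ x : ℝ, lamS ≤ x → x ≤ 1 / lamS →
        HasDerivAt F (1 / (γ * x ^ 2 + 2 * L * x + γ)) x) ∧
      F (1 / lamS) - F lamS = matiBound L γ lamS := by
  rcases eq_or_lt_of_le hL with h0 | hLpos
  · -- case L = 0
    refine ⟨fun x => (1 / γ) * arctan x, ?_, ?_⟩
    · intro x _ _
      have := (Real.hasDerivAt_arctan x).const_mul (1 / γ)
      refine this.congr_deriv (Eq.symm ?_)
      rw [← h0]
      have : (0:ℝ) < 1 + x ^ 2 := by positivity
      rw [div_mul_div_comm, one_mul]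
      congr 1
      ring
    · rw [matiBound, if_pos h0.symm]
      ring
  rcases lt_trichotomy L γ with hlt | heq | hgt
  · -- case 0 < L < γ
    have hLne : L ≠ 0 := ne_of_gt hLpos
    obtain ⟨l, hl⟩ : ∃ y : ℝ, y = L / γ := ⟨_, rfl⟩
    have hl0 : 0 < l := by rw [hl]; positivity
    have hl1 : l < 1 := by rw [hl, div_lt_one hγ]; exact hlt
    have hγl : γ * l = L := by rw [hl]; field_simp
    obtain ⟨b, hbdef⟩ : ∃ y : ℝ, y = Real.sqrt (1 - l ^ 2) := ⟨_, rfl⟩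
    have hb2 : b ^ 2 = 1 - l ^ 2 := by rw [hbdef]; exact Real.sq_sqrt (by nlinarith)
    have hbpos : 0 < b := by rw [hbdef]; exact Real.sqrt_pos.2 (by nlinarith)
    obtain ⟨r, hrdef⟩ : ∃ y : ℝ, y = Real.sqrt ((γ / L) ^ 2 - 1) := ⟨_, rfl⟩
    have hgL : 1 < γ / L := (one_lt_div hLpos).2 hlt
    have hr2 : r ^ 2 = (γ / L) ^ 2 - 1 := by rw [hrdef]; exact Real.sq_sqrt (by nlinarith)
    have hrpos : 0 < r := by rw [hrdef]; exact Real.sqrt_pos.2 (by nlinarith)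
    have hlγL : l * (γ / L) = 1 := by rw [hl]; field_simp
    have hblr : b = l * r := by
      have h1 : (l * r) ^ 2 = 1 - l ^ 2 := by
        have h2 : l ^ 2 * ((γ / L) ^ 2 - 1) = 1 - l ^ 2 := by nlinarith [hlγL]
        calc (l * r) ^ 2 = l ^ 2 * r ^ 2 := by ring
          _ = 1 - l ^ 2 := by rw [hr2]; exact h2
      rw [hbdef, ← h1, Real.sqrt_sq (by positivity)]
    have hγb : γ * b = L * r := by rw [hblr, ← hγl]; ring
    refine ⟨fun x => (1 / (γ * b)) * arctan ((x + l) / b), ?_, ?_⟩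
    · intro x hx1 hx2
      have hxpos : 0 < x := lt_of_lt_of_le hS0 hx1
      have hu : HasDerivAt (fun x : ℝ => (x + l) / b) (1 / b) x := by
        simpa using ((hasDerivAt_id x).add_const l).div_const b
      have h2 := ((Real.hasDerivAt_arctan ((x + l) / b)).comp x hu).const_mul (1 / (γ * b))
      refine h2.congr_deriv (Eq.symm ?_)
      have hQ : (0:ℝ) < γ * x ^ 2 + 2 * L * x + γ := by positivity
      rw [← hγl]
      have hbne : b ≠ 0 := ne_of_gt hbpos
      field_simp
      linear_combination hb2
    · rw [matiBound, if_neg hLne, if_pos hlt, ← hrdef]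
      have hrbl : r = b / l := by rw [hblr]; field_simp
      have hgLl : γ / L = 1 / l := by rw [hl]; field_simp
      obtain ⟨u, hudef⟩ : ∃ y : ℝ, y = (1 / lamS + l) / b := ⟨_, rfl⟩
      obtain ⟨v, hvdef⟩ : ∃ y : ℝ, y = (lamS + l) / b := ⟨_, rfl⟩
      have hupos : 0 < u := by rw [hudef]; positivity
      have hvpos : 0 < v := by rw [hvdef]; positivity
      have hsub : arctan u - arctan v = arctan ((u - v) / (1 + u * v)) := by
        have h := Real.arctan_add (x := u) (y := -v) (by nlinarith : u * -v < 1)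
        rw [Real.arctan_neg] at h
        rw [sub_eq_add_neg, h]
        congr 1
        ring
      have hWden : (0:ℝ) < 2 * (lamS / (1 + lamS)) * (γ / L - 1) + 1 + lamS := by
        have h1 : (0:ℝ) < 1 + lamS := by linarith
        have h2 : (0:ℝ) < γ / L - 1 := by linarith
        positivity
      have hDpos : (0:ℝ) < 2 + l * (lamS + 1 / lamS) := by positivity
      have huv : u - v = (1 / lamS - lamS) / b := by
        rw [hudef, hvdef, div_sub_div_same]
        congr 1
        ring
      have hbne : b ≠ 0 := ne_of_gt hbpos
      have hlne : l ≠ 0 := ne_of_gt hl0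
      have hlamne : lamS ≠ 0 := ne_of_gt hS0
      have h1uv : 1 + u * v = (2 + l * (lamS + 1 / lamS)) / b ^ 2 := by
        rw [hudef, hvdef]
        field_simp
        linear_combination lamS * hb2
      have hWden' : (0:ℝ) < 2 * (lamS / (1 + lamS)) * (1 / l - 1) + 1 + lamS := by
        rw [← hgLl]; exact hWden
      have halg2b : (b / l) * (1 - lamS) /
            (2 * (lamS / (1 + lamS)) * (1 / l - 1) + 1 + lamS) =
          b * (1 / lamS - lamS) / (2 + l * (lamS + 1 / lamS)) := by
        rw [div_eq_div_iff (ne_of_gt hWden') (ne_of_gt hDpos)]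
        field_simp
        ring
      have hW : (u - v) / (1 + u * v) =
          r * (1 - lamS) / (2 * (lamS / (1 + lamS)) * (γ / L - 1) + 1 + lamS) := by
        rw [huv, h1uv, hgLl, hrbl, halg2b]
        rw [div_div_div_eq, div_eq_div_iff (by positivity) (by positivity)]
        ring
      simp only
      rw [← hudef, ← hvdef, ← hγb, ← hW, ← hsub]
      ring
  · -- case γ = L
    refine ⟨fun x => -(1 / (γ * (x + 1))), ?_, ?_⟩
    · intro x hx1 _
      have hxpos : 0 < x := lt_of_lt_of_le hS0 hx1
      have hne : γ * (x + 1) ≠ 0 := by positivity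
      have h1 : HasDerivAt (fun x : ℝ => γ * (x + 1)) γ x := by
        simpa using ((hasDerivAt_id x).add_const 1).const_mul γ
      have h2 := (h1.inv hne).neg
      have h3 : HasDerivAt (fun x : ℝ => -(1 / (γ * (x + 1)))) (γ / (γ * (x + 1)) ^ 2) x := by
        simpa [one_div, neg_div, Pi.neg_def, Pi.inv_def] using h2
      convert h3 using 1
      rw [heq]
      rw [div_eq_div_iff (by positivity) (by positivity)]
      ring
    · rw [matiBound, if_neg (by linarith), if_neg (by linarith), if_pos heq.symm]
      rw [← heq]
      have h1 : lamS + 1 ≠ 0 := by positivity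
      have h2 : 1 + lamS ≠ 0 := by positivity
      field_simp
      ring
  · -- case γ < L
    have hLne : L ≠ 0 := ne_of_gt hLpos
    obtain ⟨l, hl⟩ : ∃ y : ℝ, y = L / γ := ⟨_, rfl⟩
    have hl1 : 1 < l := by rw [hl, lt_div_iff₀ hγ]; linarith
    have hl0 : 0 < l := by linarith
    have hγl : γ * l = L := by rw [hl]; field_simp
    have hγL0 : 0 < γ / L := by positivity
    have hγL1 : γ / L < 1 := (div_lt_one hLpos).2 hgt
    have hlγL : l * (γ / L) = 1 := by rw [hl]; field_simp
    obtain ⟨s, hsdef⟩ : ∃ y : ℝ, y = Real.sqrt (1 - (γ / L) ^ 2) := ⟨_, rfl⟩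
    have hs2 : s ^ 2 = 1 - (γ / L) ^ 2 := by rw [hsdef]; exact Real.sq_sqrt (by nlinarith)
    have hspos : 0 < s := by rw [hsdef]; exact Real.sqrt_pos.2 (by nlinarith)
    have hs1 : s < 1 := by nlinarith
    obtain ⟨c, hcdef⟩ : ∃ y : ℝ, y = l * s := ⟨_, rfl⟩
    have hcpos : 0 < c := by rw [hcdef]; positivity
    have hc2 : c ^ 2 = l ^ 2 - 1 := by
      rw [hcdef]
      have : l ^ 2 * (1 - (γ / L) ^ 2) = l ^ 2 - 1 := by nlinarith [hlγL]
      nlinarith [hs2]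
    have hcl : c < l := by nlinarith
    have hγc : γ * c = L * s := by rw [hcdef, ← hγl]; ring
    refine ⟨fun x => (1 / (2 * γ * c)) *
      (Real.log (x + (l - c)) - Real.log (x + (l + c))), ?_, ?_⟩
    · intro x hx1 hx2
      have hxpos : 0 < x := lt_of_lt_of_le hS0 hx1
      have hx1c : (0:ℝ) < x + (l - c) := by linarith
      have hx2c : (0:ℝ) < x + (l + c) := by linarith
      have h1 := ((hasDerivAt_id x).add_const (l - c)).log (ne_of_gt hx1c)
      have h2 := ((hasDerivAt_id x).add_const (l + c)).log (ne_of_gt hx2c)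
      have h3 := (h1.sub h2).const_mul (1 / (2 * γ * c))
      refine h3.congr_deriv (Eq.symm ?_)
      have hQ : (0:ℝ) < γ * x ^ 2 + 2 * L * x + γ := by positivity
      rw [← hγl]
      simp only [id]
      field_simp
      linear_combination (-2 * c) * hc2
    · rw [matiBound, if_neg hLne, if_neg (by linarith : ¬ L < γ),
        if_neg (by linarith : ¬ γ = L), ← hsdef]
      have hWpos : (0:ℝ) < 2 * (lamS / (1 + lamS)) * (γ / L - 1) + 1 + lamS := by
        have heq2 : 2 * (lamS / (1 + lamS)) * (γ / L - 1) + 1 + lamS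
            = (2 * lamS * (γ / L) + 1 + lamS ^ 2) / (1 + lamS) := by
          field_simp
          ring
        rw [heq2]
        positivity
      obtain ⟨X, hXdef⟩ : ∃ y : ℝ,
          y = s * (1 - lamS) / (2 * (lamS / (1 + lamS)) * (γ / L - 1) + 1 + lamS) := ⟨_, rfl⟩
      rw [← hXdef]
      have hX0 : 0 < X := by
        rw [hXdef]
        exact div_pos (mul_pos hspos (by linarith)) hWpos
      have hX1 : X < 1 := by
        rw [hXdef, div_lt_one hWpos]
        have heq2 : 2 * (lamS / (1 + lamS)) * (γ / L - 1) + 1 + lamS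
            = (2 * lamS * (γ / L) + 1 + lamS ^ 2) / (1 + lamS) := by
          field_simp
          ring
        rw [heq2, lt_div_iff₀ (by linarith : (0:ℝ) < 1 + lamS)]
        nlinarith
      have hlamne : lamS ≠ 0 := ne_of_gt hS0
      have hgLl : γ / L = 1 / l := by
        rw [hl]
        rw [one_div_div]
      have hXD : X * (2 + l * (lamS + 1 / lamS)) = c * (1 / lamS - lamS) := by
        have hlne : l ≠ 0 := ne_of_gt hl0
        rw [hXdef, hcdef, hgLl]
        have h1 : (1:ℝ) + lamS ≠ 0 := by positivity
        have h2 : 2 * (lamS / (1 + lamS)) * (1 / l - 1) + 1 + lamS ≠ 0 := by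
          rw [← hgLl]; exact ne_of_gt hWpos
        rw [div_mul_eq_mul_div, div_eq_iff h2]
        field_simp
        ring
      have hinv : (0:ℝ) < 1 / lamS := by positivity
      have hP1 : (0:ℝ) < 1 / lamS + (l - c) := by linarith
      have hP2 : (0:ℝ) < 1 / lamS + (l + c) := by linarith
      have hQ1 : (0:ℝ) < lamS + (l - c) := by linarith
      have hQ2 : (0:ℝ) < lamS + (l + c) := by linarith
      have h1 : (1 / lamS + (l + c)) * (lamS + (l - c))
          = (2 + l * (lamS + 1 / lamS)) - c * (1 / lamS - lamS) := by
        field_simp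
        linear_combination (-lamS) * hc2
      have h2 : (1 / lamS + (l - c)) * (lamS + (l + c))
          = (2 + l * (lamS + 1 / lamS)) + c * (1 / lamS - lamS) := by
        field_simp
        linear_combination (-lamS) * hc2
      have hkey : (1 + X) * ((1 / lamS + (l + c)) * (lamS + (l - c)))
          = (1 - X) * ((1 / lamS + (l - c)) * (lamS + (l + c))) := by
        linear_combination (1 + X) * h1 - (1 - X) * h2 + 2 * hXD
      have hlogs : Real.log (1 + X) + (Real.log (1 / lamS + (l + c)) + Real.log (lamS + (l - c)))
          = Real.log (1 - X) + (Real.log (1 / lamS + (l - c)) + Real.log (lamS + (l + c))) := by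
        have hc1 := congrArg Real.log hkey
        rw [Real.log_mul (by linarith : (1:ℝ) + X ≠ 0) (ne_of_gt (mul_pos hP2 hQ1)),
            Real.log_mul (ne_of_gt hP2) (ne_of_gt hQ1),
            Real.log_mul (by linarith : (1:ℝ) - X ≠ 0) (ne_of_gt (mul_pos hP1 hQ2)),
            Real.log_mul (ne_of_gt hP1) (ne_of_gt hQ2)] at hc1
        linarith [hc1]
      have hlogdiv : Real.log ((1 + X) / (1 - X)) = Real.log (1 + X) - Real.log (1 - X) :=
        Real.log_div (by linarith) (by linarith)
      simp only
      rw [← hγc, hlogdiv]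
      linear_combination (-(1 / (2 * γ * c))) * hlogs


/-- The solution of the clock dynamics `φ' = −2Lφ − γ(φ² + 1)`, `φ(0) = 1/λ*`,
is strictly decreasing and stays above `λ*` on `[0, T]` whenever
`T ≤ T(L, γ, λ*)`. -/
theorem stmt18 (φ : ℝ → ℝ) (L γ lamS T : ℝ)
    (hL : 0 ≤ L) (hγ : 0 < γ) (hS0 : 0 < lamS) (hS1 : lamS < 1)
    (hT : 0 ≤ T)
    (hode : ∀ τ ∈ Set.Icc (0 : ℝ) T,
      HasDerivAt φ (-2 * L * φ τ - γ * ((φ τ) ^ 2 + 1)) τ)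
    (hinit : φ 0 = 1 / lamS) :
    StrictAntiOn φ (Set.Icc (0 : ℝ) T) ∧
      (T ≤ matiBound L γ lamS → ∀ τ ∈ Set.Icc (0 : ℝ) T, lamS ≤ φ τ) := by
  have hanti := clock_strictAnti φ L γ lamS T hL hγ hS0 hode hinit hT
  refine ⟨hanti, fun hTm => ?_⟩
  obtain ⟨F, hF, hFval⟩ := mati_F L γ lamS hL hγ hS0 hS1
  exact key_bound φ F L γ lamS T hγ hL hS0 hS1 hT hode hinit hanti hF
    (by rw [hFval]; exact hTm)
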